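/- Let α ∈ 𝓘 with |α| ≥ 2 and let k be a natural number with 2 ≤ k ≤ |α|. Let p₀ ≥ 0 be real, let r₀ ≥ 2 be a natural number, and let L : 𝓘 → ℝ be a nonnegative family such that L(β) ≤ β! · (2ℕ)^{p₀β} · (r₀^{|β|³})! for every multiindex β with 1 ≤ |β| ≤ |α| − 1. Then the sum J_k(α) = ∑ L(γ¹)·L(γ²)⋯L(γᵏ), taken over all ordered k-tuples (γ¹, …, γᵏ) of nonzero multiindices with γ¹ + ⋯ + γᵏ = α, satisfies J_k(α) ≤ 2^{k·|α|} · α! · (2ℕ)^{p₀α} · (r₀^{(|α|−1)³+1})!. -/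

import Mathlib

abbrev MultiIndex : Type := ℕ →₀ ℕ

/-- `|α| = ∑ₙ αₙ` -/
def msize (α : MultiIndex) : ℕ := α.sum fun _ k => k

/-- `α! = ∏ₙ (αₙ)!` -/
def mfact (α : MultiIndex) : ℕ := α.prod fun _ k => k.factorial

/-- `(2ℕ)^{cα} = ∏ₙ (2n)^{c·αₙ}`; the index `n : ℕ` stands for the position `n+1 ≥ 1`. -/
noncomputable def wt (c : ℝ) (α : MultiIndex) : ℝ :=
  α.prod fun n k => (2 * ((n : ℝ) + 1)) ^ (c * (k : ℝ))


/-- `J_k(α) = ∑ L(γ¹)⋯L(γᵏ)` over ordered `k`-tuples of nonzero multiindices summing to `α`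
(a finite sum, expressed via `finsum` over the (finite) set of such tuples). -/
noncomputable def Jsum (L : MultiIndex → ℝ) (k : ℕ) (α : MultiIndex) : ℝ :=
  ∑ᶠ γ ∈ {γ : Fin k → MultiIndex | (∀ i, γ i ≠ 0) ∧ ∑ i, γ i = α}, ∏ i, L (γ i)


lemma msize_add (a b : MultiIndex) : msize (a + b) = msize a + msize b := by
  simpa [msize] using Finsupp.sum_add_index' (fun _ => rfl) (fun _ _ _ => rfl)

lemma msize_zero : msize 0 = 0 := by simp [msize]

lemma msize_eq_zero {a : MultiIndex} : msize a = 0 ↔ a = 0 := by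
  constructor
  · intro h
    ext n
    by_contra hn
    have hmem : n ∈ a.support := Finsupp.mem_support_iff.2 (by simpa using hn)
    have : 0 < msize a := by
      refine Finset.sum_pos' (fun _ _ => Nat.zero_le _) ⟨n, hmem, ?_⟩
      exact Nat.pos_of_ne_zero (by simpa using hn)
    omega
  · rintro rfl; exact msize_zero

lemma msize_sum {ι : Type*} (s : Finset ι) (f : ι → MultiIndex) :
    msize (∑ i ∈ s, f i) = ∑ i ∈ s, msize (f i) := by
  classical
  induction s using Finset.induction with
  | empty => simp [msize_zero]
  | insert _ _ h ih => simp [Finset.sum_insert h, msize_add, ih]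

lemma wt_pos (c : ℝ) (a : MultiIndex) : 0 < wt c a := by
  refine Finset.prod_pos fun n _ => ?_
  exact Real.rpow_pos_of_pos (by positivity) _

lemma wt_add (c : ℝ) (a b : MultiIndex) : wt c (a + b) = wt c a * wt c b := by
  refine Finsupp.prod_add_index' (fun n => by simp) (fun n k₁ k₂ => ?_)
  have h : c * ((k₁ + k₂ : ℕ) : ℝ) = c * k₁ + c * k₂ := by push_cast; ring
  rw [h, Real.rpow_add (by positivity)]

lemma wt_sum (c : ℝ) {ι : Type*} (s : Finset ι) (f : ι → MultiIndex) :
    wt c (∑ i ∈ s, f i) = ∏ i ∈ s, wt c (f i) := by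
  classical
  induction s using Finset.induction with
  | empty => simp [wt]
  | insert _ _ h ih => simp [Finset.sum_insert h, wt_add, ih, Finset.prod_insert h]

lemma mfact_add_dvd (a b : MultiIndex) : mfact a * mfact b ∣ mfact (a + b) := by
  classical
  set u := a.support ∪ b.support with hu
  have ha : mfact a = ∏ n ∈ u, (a n).factorial :=
    Finsupp.prod_of_support_subset a Finset.subset_union_left _ (fun _ _ => rfl)
  have hb : mfact b = ∏ n ∈ u, (b n).factorial :=
    Finsupp.prod_of_support_subset b Finset.subset_union_right _ (fun _ _ => rfl)
  have hab : mfact (a + b) = ∏ n ∈ u, ((a + b) n).factorial :=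
    Finsupp.prod_of_support_subset _ (Finsupp.support_add) _ (fun _ _ => rfl)
  rw [ha, hb, hab, ← Finset.prod_mul_distrib]
  exact Finset.prod_dvd_prod_of_dvd _ _ fun n _ => by
    simpa [Finsupp.add_apply] using Nat.factorial_mul_factorial_dvd_factorial_add (a n) (b n)

lemma mfact_prod_dvd {ι : Type*} (s : Finset ι) (f : ι → MultiIndex) :
    (∏ i ∈ s, mfact (f i)) ∣ mfact (∑ i ∈ s, f i) := by
  classical
  induction s using Finset.induction with
  | empty => simp [mfact]
  | insert _ _ h ih =>
    rw [Finset.prod_insert h, Finset.sum_insert h]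
    exact (mul_dvd_mul_left _ ih).trans (mfact_add_dvd _ _)

lemma mfact_pos (a : MultiIndex) : 0 < mfact a :=
  Finset.prod_pos fun _ _ => Nat.factorial_pos _

lemma sum_le_prod_of_two_le {ι : Type*} (s : Finset ι) (f : ι → ℕ)
    (h : ∀ i ∈ s, 2 ≤ f i) (hs : s.Nonempty) : ∑ i ∈ s, f i ≤ ∏ i ∈ s, f i := by
  classical
  induction hs using Finset.Nonempty.cons_induction with
  | singleton a => simp
  | cons a s ha hs ih =>
    rw [Finset.sum_cons, Finset.prod_cons]
    have h2 : 2 ≤ f a := h a (Finset.mem_cons_self a s)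
    have hp : 2 ≤ ∏ i ∈ s, f i := by
      obtain ⟨j, hj⟩ := hs
      calc 2 ≤ f j := h j (Finset.mem_cons_of_mem hj)
        _ ≤ ∏ i ∈ s, f i := Finset.single_le_prod' (fun i hi => le_trans (by norm_num) (h i (Finset.mem_cons_of_mem hi))) hj
    have hsum : ∑ i ∈ s, f i ≤ ∏ i ∈ s, f i :=
      ih (fun i hi => h i (Finset.mem_cons_of_mem hi))
    have : f a + ∏ i ∈ s, f i ≤ f a * ∏ i ∈ s, f i := by nlinarith
    omega

lemma cube_sum {ι : Type*} (s : Finset ι) (hs : s.Nonempty) (f : ι → ℕ) :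
    ∑ i ∈ s, (f i + 1) ^ 3 + 1 ≤ (∑ i ∈ s, f i + 1) ^ 3 + s.card := by
  classical
  induction hs using Finset.Nonempty.cons_induction with
  | singleton a => simp
  | cons a s ha hs ih =>
    rw [Finset.sum_cons, Finset.sum_cons, Finset.card_cons]
    have key : (f a + 1) ^ 3 + (∑ i ∈ s, f i + 1) ^ 3 ≤ (f a + ∑ i ∈ s, f i + 1) ^ 3 + 1 := by
      set x := f a; set y := ∑ i ∈ s, f i
      have : (x + y + 1) ^ 3 + 1 = (x+1)^3 + (y+1)^3 + (3*x^2*y + 3*x*y^2 + 6*x*y) := by ring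
      omega
    omega

lemma cube_final (A v T : ℕ) (h : T + 1 ≤ (A + 1) ^ 3 + (v + 2)) :
    T ≤ (A + v + 1) ^ 3 + 1 := by
  have hexp : (A + v + 1) ^ 3
      = (A + 1) ^ 3 + 3 * (A + 1) ^ 2 * v + 3 * (A + 1) * v ^ 2 + v ^ 3 := by ring
  have h2 : 1 ≤ (A + 1) ^ 2 := Nat.one_le_pow _ _ (by omega)
  have h1 : v ≤ 3 * (A + 1) ^ 2 * v := by
    calc v = 1 * v := (one_mul v).symm
    _ ≤ 3 * (A + 1) ^ 2 * v := Nat.mul_le_mul_right v (by omega)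
  rw [hexp]
  nlinarith

theorem stmt_12 (α : MultiIndex) (hα : 2 ≤ msize α) (k : ℕ) (hk2 : 2 ≤ k)
    (hkα : k ≤ msize α) (p₀ : ℝ) (hp₀ : 0 ≤ p₀) (r₀ : ℕ) (hr₀ : 2 ≤ r₀)
    (L : MultiIndex → ℝ) (hL0 : ∀ β, 0 ≤ L β)
    (hL : ∀ β : MultiIndex, 1 ≤ msize β → msize β ≤ msize α - 1 →
      L β ≤ (mfact β : ℝ) * wt p₀ β * ((r₀ ^ (msize β) ^ 3).factorial : ℝ)) :
    Jsum L k α ≤ 2 ^ (k * msize α) * (mfact α : ℝ) * wt p₀ α *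
      ((r₀ ^ ((msize α - 1) ^ 3 + 1)).factorial : ℝ) := by
  classical
  set m := msize α with hm
  have hknz : Nonempty (Fin k) := ⟨⟨0, by omega⟩⟩
  set S : Set (Fin k → MultiIndex) := {γ | (∀ i, γ i ≠ 0) ∧ ∑ i, γ i = α} with hSdef
  set T : Finset (Fin k → MultiIndex) := Fintype.piFinset fun _ => Finset.Iic α with hT
  have hsub : S ⊆ ↑T := by
    rintro γ ⟨hne, hsum⟩
    simp only [hT, Finset.mem_coe, Fintype.mem_piFinset, Finset.mem_Iic]
    intro i
    rw [← hsum]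
    exact Finset.single_le_sum (f := γ) (fun j _ => zero_le) (Finset.mem_univ i)
  have hfin : S.Finite := Set.Finite.subset (Finset.finite_toSet T) hsub
  set B : ℝ := (mfact α : ℝ) * wt p₀ α * ((r₀ ^ ((m - 1) ^ 3 + 1)).factorial : ℝ) with hB
  have hB0 : 0 ≤ B := by
    have := (wt_pos p₀ α).le
    positivity
  -- cardinality bound
  have hcardIic : (Finset.Iic α).card ≤ 2 ^ m := by
    rw [Finsupp.card_Iic]
    calc ∏ i ∈ α.support, (Finset.Iic (α i)).card
        = ∏ i ∈ α.support, (α i + 1) := by simp [Nat.card_Iic]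
      _ ≤ ∏ i ∈ α.support, 2 ^ (α i) :=
          Finset.prod_le_prod' fun i _ => Nat.lt_two_pow_self (n := α i)
      _ = 2 ^ m := by rw [Finset.prod_pow_eq_pow_sum]; rfl
  have hcard : hfin.toFinset.card ≤ 2 ^ (k * m) := by
    have h1 : hfin.toFinset ⊆ T := by
      intro γ hγ
      exact hsub (hfin.mem_toFinset.mp hγ)
    calc hfin.toFinset.card ≤ T.card := Finset.card_le_card h1
      _ = ∏ _i : Fin k, (Finset.Iic α).card := Fintype.card_piFinset _
      _ = (Finset.Iic α).card ^ k := by simp [Finset.prod_const]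
      _ ≤ (2 ^ m) ^ k := Nat.pow_le_pow_left hcardIic k
      _ = 2 ^ (k * m) := by rw [← pow_mul, mul_comm]
  -- pointwise bound
  have hpoint : ∀ γ ∈ hfin.toFinset, ∏ i, L (γ i) ≤ B := by
    intro γ hγ
    obtain ⟨hne, hsum⟩ := hfin.mem_toFinset.mp hγ
    have hs1 : ∀ i, 1 ≤ msize (γ i) := fun i =>
      Nat.one_le_iff_ne_zero.mpr fun h => hne i (msize_eq_zero.mp h)
    have hssum : ∑ i, msize (γ i) = m := by rw [← msize_sum, hsum]
    have hsle : ∀ i, msize (γ i) ≤ m - 1 := by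
      intro i
      have : Nontrivial (Fin k) := Fin.nontrivial_iff_two_le.mpr hk2
      obtain ⟨j, hj⟩ := exists_ne i
      have hpair : msize (γ i) + msize (γ j) = ∑ t ∈ ({i, j} : Finset (Fin k)), msize (γ t) :=
        (Finset.sum_pair (f := fun t => msize (γ t)) (Ne.symm hj)).symm
      have hle : ∑ t ∈ ({i, j} : Finset (Fin k)), msize (γ t) ≤ ∑ t, msize (γ t) :=
        Finset.sum_le_sum_of_subset (Finset.subset_univ _)
      have := hs1 j
      omega
    -- factorial part
    have hfactNat : ∏ i, (r₀ ^ (msize (γ i)) ^ 3).factorial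
        ≤ (r₀ ^ ((m - 1) ^ 3 + 1)).factorial := by
      have step1 : ∏ i, (r₀ ^ (msize (γ i)) ^ 3).factorial
          ≤ (∑ i, r₀ ^ (msize (γ i)) ^ 3).factorial :=
        Nat.le_of_dvd (Nat.factorial_pos _) (Nat.prod_factorial_dvd_factorial_sum _ _)
      have h2le : ∀ i ∈ Finset.univ, 2 ≤ r₀ ^ (msize (γ i)) ^ 3 := by
        intro i _
        calc 2 ≤ r₀ := hr₀
          _ ≤ r₀ ^ (msize (γ i)) ^ 3 := Nat.le_self_pow (by have := hs1 i; positivity) _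
      have step2 : ∑ i, r₀ ^ (msize (γ i)) ^ 3 ≤ ∏ i, r₀ ^ (msize (γ i)) ^ 3 :=
        sum_le_prod_of_two_le _ _ h2le Finset.univ_nonempty
      have step3 : ∏ i, r₀ ^ (msize (γ i)) ^ 3 = r₀ ^ (∑ i, (msize (γ i)) ^ 3) :=
        Finset.prod_pow_eq_pow_sum _ _ _
      have hcube : ∑ i, (msize (γ i)) ^ 3 ≤ (m - 1) ^ 3 + 1 := by
        set g : Fin k → ℕ := fun i => msize (γ i) - 1 with hg
        have hgi : ∀ i, msize (γ i) = g i + 1 := fun i => by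
          have := hs1 i; simp only [hg]; omega
        have hcs := cube_sum Finset.univ Finset.univ_nonempty g
        have hgs : ∑ i, (g i + 1) = m := by
          rw [← hssum]; exact Finset.sum_congr rfl fun i _ => (hgi i).symm
        have hA : ∑ i, g i + k = m := by
          rw [← hgs, Finset.sum_add_distrib]; simp
        obtain ⟨v, hv⟩ : ∃ v, k = v + 2 := ⟨k - 2, by omega⟩
        have hrw : ∑ i, (msize (γ i)) ^ 3 = ∑ i, (g i + 1) ^ 3 :=
          Finset.sum_congr rfl fun i _ => by rw [hgi i]
        have hcard' : (Finset.univ : Finset (Fin k)).card = k := by simp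
        rw [hrw]
        have hm1 : m - 1 = ∑ i, g i + v + 1 := by omega
        rw [hm1]
        refine cube_final _ _ _ ?_
        calc ∑ i, (g i + 1) ^ 3 + 1 ≤ (∑ i, g i + 1) ^ 3 + (Finset.univ : Finset (Fin k)).card := hcs
          _ = (∑ i, g i + 1) ^ 3 + (v + 2) := by
              have hcv : (Finset.univ : Finset (Fin k)).card = v + 2 := by
                rw [Finset.card_univ, Fintype.card_fin, hv]
              rw [hcv]
      calc ∏ i, (r₀ ^ (msize (γ i)) ^ 3).factorial
          ≤ (∑ i, r₀ ^ (msize (γ i)) ^ 3).factorial := step1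
        _ ≤ (r₀ ^ ((m - 1) ^ 3 + 1)).factorial := by
            apply Nat.factorial_le
            calc ∑ i, r₀ ^ (msize (γ i)) ^ 3 ≤ ∏ i, r₀ ^ (msize (γ i)) ^ 3 := step2
              _ = r₀ ^ (∑ i, (msize (γ i)) ^ 3) := step3
              _ ≤ r₀ ^ ((m - 1) ^ 3 + 1) := Nat.pow_le_pow_right (by omega) hcube
    -- mfact part
    have hmfactNat : ∏ i, mfact (γ i) ≤ mfact α := by
      refine Nat.le_of_dvd (mfact_pos α) ?_
      rw [← hsum]
      exact mfact_prod_dvd _ _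
    -- combine
    calc ∏ i, L (γ i)
        ≤ ∏ i, ((mfact (γ i) : ℝ) * wt p₀ (γ i) * ((r₀ ^ (msize (γ i)) ^ 3).factorial : ℝ)) := by
          refine Finset.prod_le_prod (fun i _ => hL0 _) fun i _ => hL _ (hs1 i) (hsle i)
      _ = (∏ i, (mfact (γ i) : ℝ)) * (∏ i, wt p₀ (γ i))
            * (∏ i, ((r₀ ^ (msize (γ i)) ^ 3).factorial : ℝ)) := by
          rw [Finset.prod_mul_distrib, Finset.prod_mul_distrib]
      _ ≤ (mfact α : ℝ) * wt p₀ α * ((r₀ ^ ((m - 1) ^ 3 + 1)).factorial : ℝ) := by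
          have e1 : ∏ i, wt p₀ (γ i) = wt p₀ α := by rw [← wt_sum, hsum]
          have e2 : (∏ i, (mfact (γ i) : ℝ)) ≤ (mfact α : ℝ) := by
            rw [← Nat.cast_prod]; exact_mod_cast hmfactNat
          have e3 : (∏ i, ((r₀ ^ (msize (γ i)) ^ 3).factorial : ℝ))
              ≤ ((r₀ ^ ((m - 1) ^ 3 + 1)).factorial : ℝ) := by
            rw [← Nat.cast_prod]; exact_mod_cast hfactNat
          rw [e1]
          have hwt := (wt_pos p₀ α).le
          have hp1 : (0:ℝ) ≤ ∏ i, (mfact (γ i) : ℝ) :=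
            Finset.prod_nonneg fun i _ => by positivity
          have hp3 : (0:ℝ) ≤ ∏ i, ((r₀ ^ (msize (γ i)) ^ 3).factorial : ℝ) :=
            Finset.prod_nonneg fun i _ => by positivity
          gcongr
  -- main chain
  rw [Jsum, ← hSdef, ← hfin.coe_toFinset, finsum_mem_coe_finset]
  calc ∑ γ ∈ hfin.toFinset, ∏ i, L (γ i)
      ≤ hfin.toFinset.card • B := Finset.sum_le_card_nsmul _ _ B hpoint
    _ = (hfin.toFinset.card : ℝ) * B := nsmul_eq_mul _ _
    _ ≤ (2 ^ (k * m) : ℝ) * B := by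
        have : (hfin.toFinset.card : ℝ) ≤ ((2 ^ (k * m) : ℕ) : ℝ) := Nat.cast_le.mpr hcard
        push_cast at this
        exact mul_le_mul_of_nonneg_right this hB0
    _ = 2 ^ (k * m) * (mfact α : ℝ) * wt p₀ α * ((r₀ ^ ((m - 1) ^ 3 + 1)).factorial : ℝ) := by
        rw [hB]; ring
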